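/- Consider the system of ODEs on {(p₁,p₂,q₁,q₂) ∈ ℝ⁴ : q₁ > 0}: ṗ₁ = p₁p₂/q₁² + q₂, q̇₁ = p₂/q₁, ṗ₂ = q₁, q̇₂ = p₁/q₁. Then the function Ḡ(p₁,p₂,q₁,q₂) = 2p₂² − (4/3)q₁³ is a first integral: for every solution (p₁(t),p₂(t),q₁(t),q₂(t)) on an interval, the value 2p₂(t)² − (4/3)q₁(t)³ is constant in t. -/

import Mathlib

open Set

/-- The function `Ḡ(p₁,p₂,q₁,q₂) = 2p₂² − (4/3)q₁³` is a first integral of the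
system `ṗ₁ = p₁p₂/q₁² + q₂, q̇₁ = p₂/q₁, ṗ₂ = q₁, q̇₂ = p₁/q₁` on `q₁ > 0`:
it is constant along every solution on an interval. -/
theorem stmt11 (I : Set ℝ) (hI : I.OrdConnected) (p₁ p₂ q₁ q₂ : ℝ → ℝ)
    (hpos : ∀ t ∈ I, q₁ t > 0)
    (hp₁ : ∀ t ∈ I, HasDerivAt p₁ (p₁ t * p₂ t / (q₁ t) ^ 2 + q₂ t) t)
    (hq₁ : ∀ t ∈ I, HasDerivAt q₁ (p₂ t / q₁ t) t)
    (hp₂ : ∀ t ∈ I, HasDerivAt p₂ (q₁ t) t)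
    (hq₂ : ∀ t ∈ I, HasDerivAt q₂ (p₁ t / q₁ t) t) :
    ∀ t₁ ∈ I, ∀ t₂ ∈ I,
      2 * (p₂ t₁) ^ 2 - (4 / 3) * (q₁ t₁) ^ 3
        = 2 * (p₂ t₂) ^ 2 - (4 / 3) * (q₁ t₂) ^ 3 := by
  set G : ℝ → ℝ := fun t => 2 * (p₂ t) ^ 2 - (4 / 3) * (q₁ t) ^ 3 with hG
  have hderiv : ∀ t ∈ I, HasDerivAt G 0 t := by
    intro t ht
    have h1 := ((hp₂ t ht).pow 2).const_mul (2 : ℝ)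
    have h2 := ((hq₁ t ht).pow 3).const_mul (4 / 3 : ℝ)
    have h := h1.sub h2
    convert h using 1
    case e'_4 => rfl
    case e'_5 => rfl
    case e'_8 => rfl
    have hq : q₁ t ≠ 0 := (hpos t ht).ne'
    field_simp
    ring
  have key : ∀ a ∈ I, ∀ b ∈ I, a ≤ b → G a = G b := by
    intro a ha b hb hab
    have hsub : Icc a b ⊆ I := hI.out ha hb
    have := constant_of_has_deriv_right_zero
      (f := G) (a := a) (b := b)
      (fun x hx => ((hderiv x (hsub hx)).continuousAt).continuousWithinAt)
      (fun x hx => ((hderiv x (hsub (Ico_subset_Icc_self hx))).hasDerivWithinAt))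
    exact (this b (right_mem_Icc.2 hab)).symm
  intro t₁ h₁ t₂ h₂
  rcases le_total t₁ t₂ with h | h
  · exact key t₁ h₁ t₂ h₂ h
  · exact (key t₂ h₂ t₁ h₁ h).symm
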